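/- With the abelian subalgebra a = span{F,Q,R} ⊂ g^J identified with polynomials of degree ≤ 2, and B ⊂ G^J(ℝ) the Borel subgroup of upper-triangular elements: if g₁, g₂ ∈ G^J(ℝ) and k₁, k₂ ∈ a satisfy Ad(g₁)k₁ = Ad(g₂)k₂, then k₁ and k₂ have the same image as functions ℝ → ℝ (Im(k₁) = Im(k₂)). -/

import Mathlib

open Matrix

abbrev M2 := Matrix (Fin 2) (Fin 2) ℝ
abbrev GJalg := M2 × (Fin 2 → ℝ) × ℝ

/-- Standard symplectic form on ℝ². -/
def Om (ξ η : Fin 2 → ℝ) : ℝ := ξ 0 * η 1 - ξ 1 * η 0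

/-- The adjoint representation of the Jacobi group:
`Ad(M,X,κ)·(A,ξ,r) = (MAM⁻¹, XAM⁻¹ + ξM⁻¹, r − 2Ω(ξ,X) − Ω(XA,X))`. -/
noncomputable def AdJ (M : M2) (X : Fin 2 → ℝ) (κ : ℝ) (L : GJalg) : GJalg :=
  (M * L.1 * M⁻¹,
   Matrix.vecMul X (L.1 * M⁻¹) + Matrix.vecMul L.2.1 M⁻¹,
   L.2.2 - 2 * Om L.2.1 X - Om (Matrix.vecMul X L.1) X)

/-- The element of `a = span{F,Q,R}` corresponding to the polynomial
`k(x) = α x² + β x + γ` via `F ↦ −x²`, `Q ↦ x`, `R ↦ −¼`. -/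
noncomputable def toA (α β γ : ℝ) : GJalg := (!![0, -α; 0, 0], ![0, β], -4 * γ)

lemma inv_eq_aux (M : M2) (hM : M.det = 1) :
    M⁻¹ = !![M 1 1, -M 0 1; -M 1 0, M 0 0] := by
  rw [Matrix.inv_def, hM, Matrix.adjugate_fin_two]
  simp

lemma zero_of_sq (α a : ℝ) (hα : α ≠ 0) (h : α * a ^ 2 = 0) : a = 0 := by
  rcases mul_eq_zero.1 h with h' | h'
  · exact absurd h' hα
  · exact pow_eq_zero_iff (n := 2) (by norm_num) |>.1 h'

/-- Range of a genuine quadratic. -/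
lemma quad_range (α β γ : ℝ) (hα : α ≠ 0) :
    Set.range (fun x : ℝ => α * x ^ 2 + β * x + γ) =
      {y : ℝ | 4 * α * γ - β ^ 2 ≤ 4 * α * y} := by
  ext y
  simp only [Set.mem_range, Set.mem_setOf_eq]
  constructor
  · rintro ⟨x, rfl⟩
    nlinarith [sq_nonneg (2 * α * x + β)]
  · intro hy
    have hd : (0:ℝ) ≤ β ^ 2 - 4 * α * (γ - y) := by linarith
    set s := Real.sqrt (β ^ 2 - 4 * α * (γ - y)) with hs
    have hs2 : s ^ 2 = β ^ 2 - 4 * α * (γ - y) := Real.sq_sqrt hd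
    refine ⟨(-β + s) / (2 * α), ?_⟩
    have h4 : (4 * α) ≠ 0 := by simpa using hα
    have key : 4 * α * (α * ((-β + s) / (2 * α)) ^ 2 + β * ((-β + s) / (2 * α)) + γ) =
        4 * α * y := by
      have h2 : 2 * α * ((-β + s) / (2 * α)) = -β + s := by
        field_simp
      have h2sq : (2 * α * ((-β + s) / (2 * α))) ^ 2 = (-β + s) ^ 2 := by rw [h2]
      linear_combination h2sq + 2 * β * h2 + hs2
    exact mul_left_cancel₀ h4 key

lemma half_cmp (α₁ α₂ γ₁ γ₂ β₁ β₂ y : ℝ) (hpos : 0 < α₁ * α₂) (hα₁ : α₁ ≠ 0)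
    (cross : (4 * α₁ * γ₁ - β₁ ^ 2) * α₂ = (4 * α₂ * γ₂ - β₂ ^ 2) * α₁)
    (hy : 4 * α₁ * γ₁ - β₁ ^ 2 ≤ 4 * α₁ * y) :
    4 * α₂ * γ₂ - β₂ ^ 2 ≤ 4 * α₂ * y := by
  have hsq : (0:ℝ) < α₁ ^ 2 := by positivity
  have key : α₁ ^ 2 * (4 * α₂ * y) - α₁ ^ 2 * (4 * α₂ * γ₂ - β₂ ^ 2) =
      (α₁ * α₂) * (4 * α₁ * y - (4 * α₁ * γ₁ - β₁ ^ 2)) := by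
    linear_combination α₁ * cross
  have h5 : α₁ ^ 2 * (4 * α₂ * γ₂ - β₂ ^ 2) ≤ α₁ ^ 2 * (4 * α₂ * y) := by
    nlinarith [mul_nonneg hpos.le (by linarith : (0:ℝ) ≤ 4 * α₁ * y - (4 * α₁ * γ₁ - β₁ ^ 2))]
  exact le_of_mul_le_mul_left h5 hsq

/-- if `Ad(g₁)k₁ = Ad(g₂)k₂` with `g₁, g₂` in the Jacobi group and
`k₁, k₂ ∈ a` (polynomials of degree ≤ 2), then `Im(k₁) = Im(k₂)`. -/
theorem stmt13 (M₁ M₂ : M2) (hM₁ : M₁.det = 1) (hM₂ : M₂.det = 1)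
    (X₁ X₂ : Fin 2 → ℝ) (κ₁ κ₂ : ℝ) (α₁ β₁ γ₁ α₂ β₂ γ₂ : ℝ)
    (h : AdJ M₁ X₁ κ₁ (toA α₁ β₁ γ₁) = AdJ M₂ X₂ κ₂ (toA α₂ β₂ γ₂)) :
    Set.range (fun x : ℝ => α₁ * x ^ 2 + β₁ * x + γ₁) =
      Set.range (fun x : ℝ => α₂ * x ^ 2 + β₂ * x + γ₂) := by
  rw [AdJ, AdJ, toA, toA, inv_eq_aux M₁ hM₁, inv_eq_aux M₂ hM₂,
    Prod.ext_iff, Prod.ext_iff] at h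
  obtain ⟨h1, h2, h3⟩ := h
  have e01 := congrFun (congrFun h1 0) 1
  have e10 := congrFun (congrFun h1 1) 0
  have f0 := congrFun h2 0
  have f1 := congrFun h2 1
  simp [Matrix.mul_apply, Fin.sum_univ_two, Matrix.vecMul, Om,
    dotProduct, Pi.add_apply] at e01 e10 f0 f1 h3
  rw [Matrix.det_fin_two] at hM₁ hM₂
  set a₁ := M₁ 0 0 with ha₁d; set c₁ := M₁ 1 0 with hc₁d
  set a₂ := M₂ 0 0 with ha₂d; set c₂ := M₂ 1 0 with hc₂d
  set x₁ := X₁ 0 with hx₁d; set x₂ := X₂ 0 with hx₂d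
  have hvh₁ : Matrix.vecHead X₁ = x₁ := rfl
  have hvh₂ : Matrix.vecHead X₂ = x₂ := rfl
  rw [hvh₁, hvh₂] at f0 f1
  clear h1 h2
  -- normalized equations
  have E01 : α₁ * a₁ ^ 2 = α₂ * a₂ ^ 2 := by linear_combination e01
  have E10 : α₁ * c₁ ^ 2 = α₂ * c₂ ^ 2 := by linear_combination e10
  have F1 : (β₁ - α₁ * x₁) * a₁ = (β₂ - α₂ * x₂) * a₂ := by linear_combination f1
  have F0 : (β₁ - α₁ * x₁) * c₁ = (β₂ - α₂ * x₂) * c₂ := by linear_combination -f0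
  have H3 : -(4 * γ₁) + 2 * (β₁ * x₁) - α₁ * x₁ ^ 2 =
      -(4 * γ₂) + 2 * (β₂ * x₂) - α₂ * x₂ ^ 2 := by linear_combination h3
  clear e01 e10 f0 f1 h3
  have hac₁ : a₁ ≠ 0 ∨ c₁ ≠ 0 := by
    by_contra hc
    push_neg at hc
    rw [hc.1, hc.2] at hM₁
    simp at hM₁
  have hac₂ : a₂ ≠ 0 ∨ c₂ ≠ 0 := by
    by_contra hc
    push_neg at hc
    rw [hc.1, hc.2] at hM₂
    simp at hM₂
  by_cases hα₁ : α₁ = 0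
  · subst hα₁
    have hα₂ : α₂ = 0 := by
      by_contra hα₂
      rcases hac₂ with ha | hc
      · exact ha (zero_of_sq α₂ a₂ hα₂ (by linarith [E01]))
      · exact hc (zero_of_sq α₂ c₂ hα₂ (by linarith [E10]))
    subst hα₂
    simp only [zero_mul, sub_zero] at F0 F1
    by_cases hβ₁ : β₁ = 0
    · subst hβ₁
      have hβ₂ : β₂ = 0 := by
        rcases hac₂ with ha | hc
        · rcases mul_eq_zero.1 (by linarith [F1] : β₂ * a₂ = 0) with h' | h'
          · exact h'
          · exact absurd h' ha
        · rcases mul_eq_zero.1 (by linarith [F0] : β₂ * c₂ = 0) with h' | h'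
          · exact h'
          · exact absurd h' hc
      subst hβ₂
      have hγ : γ₁ = γ₂ := by linarith
      subst hγ
      rfl
    · have hβ₂ : β₂ ≠ 0 := by
        intro hβ₂
        subst hβ₂
        rcases hac₁ with ha | hc
        · rcases mul_eq_zero.1 (by linarith [F1] : β₁ * a₁ = 0) with h' | h'
          · exact hβ₁ h'
          · exact ha h'
        · rcases mul_eq_zero.1 (by linarith [F0] : β₁ * c₁ = 0) with h' | h'
          · exact hβ₁ h'
          · exact hc h'
      have r1 : Set.range (fun x : ℝ => 0 * x ^ 2 + β₁ * x + γ₁) = Set.univ :=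
        Set.eq_univ_of_forall fun y => ⟨(y - γ₁) / β₁, by field_simp; ring⟩
      have r2 : Set.range (fun x : ℝ => 0 * x ^ 2 + β₂ * x + γ₂) = Set.univ :=
        Set.eq_univ_of_forall fun y => ⟨(y - γ₂) / β₂, by field_simp; ring⟩
      rw [r1, r2]
  · have hα₂ : α₂ ≠ 0 := by
      intro hα₂
      subst hα₂
      rcases hac₁ with ha | hc
      · exact ha (zero_of_sq α₁ a₁ hα₁ (by linarith [E01]))
      · exact hc (zero_of_sq α₁ c₁ hα₁ (by linarith [E10]))
    have hpos : 0 < α₁ * α₂ := by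
      by_contra hle
      push_neg at hle
      rcases hac₁ with ha | hc
      · have ha2 : a₂ ≠ 0 := by
          intro h0
          rw [h0] at E01
          exact ha (zero_of_sq α₁ a₁ hα₁ (by linarith [E01]))
        have hp : 0 < (α₂ * a₂ ^ 2) ^ 2 := by positivity
        have : (α₁ * α₂) * (a₁ * a₂) ^ 2 = (α₂ * a₂ ^ 2) ^ 2 := by
          linear_combination (α₂ * a₂ ^ 2) * E01
        nlinarith [sq_nonneg (a₁ * a₂)]
      · have hc2 : c₂ ≠ 0 := by
          intro h0
          rw [h0] at E10
          exact hc (zero_of_sq α₁ c₁ hα₁ (by linarith [E10]))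
        have hp : 0 < (α₂ * c₂ ^ 2) ^ 2 := by positivity
        have : (α₁ * α₂) * (c₁ * c₂) ^ 2 = (α₂ * c₂ ^ 2) ^ 2 := by
          linear_combination (α₂ * c₂ ^ 2) * E10
        nlinarith [sq_nonneg (c₁ * c₂)]
    have hu : α₂ * (β₁ - α₁ * x₁) ^ 2 = α₁ * (β₂ - α₂ * x₂) ^ 2 := by
      rcases hac₁ with ha | hc
      · have key : α₂ * (β₁ - α₁ * x₁) ^ 2 * a₁ ^ 2 =
            α₁ * (β₂ - α₂ * x₂) ^ 2 * a₁ ^ 2 := by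
          linear_combination (α₂ * ((β₁ - α₁ * x₁) * a₁ + (β₂ - α₂ * x₂) * a₂)) * F1 -
            (β₂ - α₂ * x₂) ^ 2 * E01
        exact mul_right_cancel₀ (pow_ne_zero 2 ha) key
      · have key : α₂ * (β₁ - α₁ * x₁) ^ 2 * c₁ ^ 2 =
            α₁ * (β₂ - α₂ * x₂) ^ 2 * c₁ ^ 2 := by
          linear_combination (α₂ * ((β₁ - α₁ * x₁) * c₁ + (β₂ - α₂ * x₂) * c₂)) * F0 -
            (β₂ - α₂ * x₂) ^ 2 * E10
        exact mul_right_cancel₀ (pow_ne_zero 2 hc) key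
    have cross : (4 * α₁ * γ₁ - β₁ ^ 2) * α₂ = (4 * α₂ * γ₂ - β₂ ^ 2) * α₁ := by
      linear_combination (-(α₁ * α₂)) * H3 - hu
    rw [quad_range α₁ β₁ γ₁ hα₁, quad_range α₂ β₂ γ₂ hα₂]
    ext y
    simp only [Set.mem_setOf_eq]
    constructor
    · exact half_cmp α₁ α₂ γ₁ γ₂ β₁ β₂ y hpos hα₁ cross
    · exact half_cmp α₂ α₁ γ₂ γ₁ β₂ β₁ y (by linarith [mul_comm α₁ α₂, hpos]) hα₂
        (by linarith [cross])
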